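/- Bernstein two-regime tail integral bound: let U_1,…,U_n be i.i.d. centered random variables with |U_i| ≤ 1/n and Var(U_i) ≤ q/n². Then for all p ≥ 2, E[|Σ U_i|^p] = p ∫_0^∞ t^{p−1} P(|Σ U_i| ≥ t) dt ≤ 2p [ (1/2)(3q/n)^{p/2} Γ(p/2) + (2/n)^p Γ(p, nq/4) ], where Γ(s,x) is the upper incomplete Gamma function. -/

import Mathlib

open Real MeasureTheory ProbabilityTheory

/-- The upper incomplete Gamma function `Γ(s,x) = ∫_x^∞ t^{s-1} e^{-t} dt`. -/
noncomputable def upperGamma (s x : ℝ) : ℝ := ∫ t in Set.Ioi x, t ^ (s - 1) * Real.exp (-t)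

/- ### Auxiliary lemmas -/

lemma exp_le_quad {x : ℝ} (hx : |x| ≤ 1) : Real.exp x ≤ 1 + x + 3/4 * x ^ 2 := by
  have h := Real.exp_bound hx (n := 2) (by norm_num)
  have h2 : ∑ m ∈ Finset.range 2, x ^ m / m.factorial = 1 + x := by
    simp [Finset.sum_range_succ]
  rw [h2] at h
  have h3 := (abs_le.1 h).2
  have h4 : |x| ^ 2 = x ^ 2 := sq_abs x
  rw [h4] at h3
  have h5 : (((2:ℕ).succ : ℝ)) / (((2:ℕ).factorial : ℝ) * ((2:ℕ) : ℝ)) = 3/4 := by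
    norm_num [Nat.factorial]
  rw [h5] at h3
  linarith

lemma mgf_le_of_bound {Ω : Type*} [MeasurableSpace Ω] (μ : Measure Ω) [IsProbabilityMeasure μ]
    {X : Ω → ℝ} (hX : Measurable X) {b v l : ℝ} (hb : 0 ≤ b)
    (hcent : ∫ ω, X ω ∂μ = 0) (hbdd : ∀ᵐ ω ∂μ, |X ω| ≤ b)
    (hvar : ∫ ω, X ω ^ 2 ∂μ ≤ v) (hl : 0 ≤ l) (hlb : l * b ≤ 1) :
    mgf X μ l ≤ Real.exp (3/4 * l ^ 2 * v) := by
  have hintX : Integrable X μ := by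
    refine Integrable.mono' (integrable_const b) hX.aestronglyMeasurable ?_
    filter_upwards [hbdd] with ω h using by rwa [Real.norm_eq_abs]
  have hintX2 : Integrable (fun ω => X ω ^ 2) μ := by
    refine Integrable.mono' (integrable_const (b ^ 2)) (hX.pow_const 2).aestronglyMeasurable ?_
    filter_upwards [hbdd] with ω h
    rw [Real.norm_eq_abs, abs_pow]
    exact pow_le_pow_left₀ (abs_nonneg _) h 2
  have hintExp : Integrable (fun ω => Real.exp (l * X ω)) μ := by
    refine Integrable.mono' (integrable_const (Real.exp (l * b)))
      (Real.measurable_exp.comp (hX.const_mul l)).aestronglyMeasurable ?_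
    filter_upwards [hbdd] with ω h
    rw [Real.norm_eq_abs, Real.abs_exp]
    apply Real.exp_le_exp.2
    calc l * X ω ≤ l * |X ω| := mul_le_mul_of_nonneg_left (le_abs_self _) hl
      _ ≤ l * b := mul_le_mul_of_nonneg_left h hl
  have hpt : ∀ᵐ ω ∂μ, Real.exp (l * X ω) ≤ 1 + l * X ω + 3/4 * l ^ 2 * X ω ^ 2 := by
    filter_upwards [hbdd] with ω h
    have habs : |l * X ω| ≤ 1 := by
      rw [abs_mul, abs_of_nonneg hl]
      calc l * |X ω| ≤ l * b := mul_le_mul_of_nonneg_left h hl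
        _ ≤ 1 := hlb
    have := exp_le_quad habs
    nlinarith [sq_nonneg (X ω)]
  have hRHSint : Integrable (fun ω => 1 + l * X ω + 3/4 * l ^ 2 * X ω ^ 2) μ :=
    ((integrable_const 1).add (hintX.const_mul l)).add (hintX2.const_mul (3/4 * l ^ 2))
  have h1 : mgf X μ l ≤ ∫ ω, (1 + l * X ω + 3/4 * l ^ 2 * X ω ^ 2) ∂μ :=
    integral_mono_ae hintExp hRHSint hpt
  have h2 : ∫ ω, (1 + l * X ω + 3/4 * l ^ 2 * X ω ^ 2) ∂μ
      = 1 + 3/4 * l ^ 2 * ∫ ω, X ω ^ 2 ∂μ := by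
    have hA : Integrable (fun ω => 1 + l * X ω) μ := (integrable_const 1).add (hintX.const_mul l)
    have hB : Integrable (fun ω => 3/4 * l ^ 2 * X ω ^ 2) μ := hintX2.const_mul (3/4 * l ^ 2)
    rw [integral_add hA hB, integral_add (integrable_const 1) (hintX.const_mul l),
      integral_const, integral_const_mul, integral_const_mul, hcent]
    simp
  have h3 : 1 + 3/4 * l ^ 2 * ∫ ω, X ω ^ 2 ∂μ ≤ 1 + 3/4 * l ^ 2 * v := by
    have : (0:ℝ) ≤ 3/4 * l ^ 2 := by positivity
    nlinarith
  have h4 : 1 + 3/4 * l ^ 2 * v ≤ Real.exp (3/4 * l ^ 2 * v) := by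
    have := Real.add_one_le_exp (3/4 * l ^ 2 * v)
    linarith
  linarith

lemma chernoff_one_sided {Ω : Type*} [MeasurableSpace Ω] (μ : Measure Ω) [IsProbabilityMeasure μ]
    (n : ℕ) (hn : 0 < n) (q : ℝ) (hq : 0 < q) (V : Fin n → Ω → ℝ)
    (hmeas : ∀ i, Measurable (V i))
    (hindep : iIndepFun V μ)
    (hcent : ∀ i, ∫ ω, V i ω ∂μ = 0)
    (hbdd : ∀ i, ∀ᵐ ω ∂μ, |V i ω| ≤ 1 / n)
    (hvar : ∀ i, ∫ ω, (V i ω) ^ 2 ∂μ ≤ q / (n : ℝ) ^ 2)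
    {t l : ℝ} (hl : 0 ≤ l) (hln : l ≤ n) :
    (μ {ω | t ≤ ∑ i, V i ω}).toReal ≤ Real.exp (-l * t + 3/4 * l ^ 2 * q / n) := by
  have hn0 : ((n:ℝ)) ≠ 0 := Nat.cast_ne_zero.2 hn.ne'
  have hnpos : (0:ℝ) < n := Nat.cast_pos.2 hn
  have hSbd : ∀ᵐ ω ∂μ, |∑ i, V i ω| ≤ 1 := by
    filter_upwards [ae_all_iff.2 hbdd] with ω h
    calc |∑ i, V i ω| ≤ ∑ i, |V i ω| := Finset.abs_sum_le_sum_abs _ _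
      _ ≤ ∑ _i : Fin n, (1:ℝ)/n := Finset.sum_le_sum fun i _ => h i
      _ = 1 := by simp [Finset.sum_const]; field_simp
  have hSmeas : Measurable (fun ω => ∑ i, V i ω) :=
    Finset.measurable_sum _ fun i _ => hmeas i
  have hintExpS : Integrable (fun ω => Real.exp (l * ∑ i, V i ω)) μ := by
    refine Integrable.mono' (integrable_const (Real.exp l))
      (Real.measurable_exp.comp (hSmeas.const_mul l)).aestronglyMeasurable ?_
    filter_upwards [hSbd] with ω h
    rw [Real.norm_eq_abs, Real.abs_exp]
    apply Real.exp_le_exp.2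
    calc l * ∑ i, V i ω ≤ l * |∑ i, V i ω| := mul_le_mul_of_nonneg_left (le_abs_self _) hl
      _ ≤ l * 1 := mul_le_mul_of_nonneg_left h hl
      _ = l := mul_one l
  have hcher := measure_ge_le_exp_mul_mgf (X := fun ω => ∑ i, V i ω) (μ := μ) t hl hintExpS
  have hfun : (fun ω => ∑ i, V i ω) = ∑ i, V i := by
    funext ω; simp
  have hmgf : mgf (fun ω => ∑ i, V i ω) μ l = ∏ i, mgf (V i) μ l := by
    rw [hfun]
    exact hindep.mgf_sum hmeas Finset.univ
  have hbound : ∏ i, mgf (V i) μ l ≤ Real.exp (3/4 * l ^ 2 * q / n) := by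
    have hone : ∀ i : Fin n, mgf (V i) μ l ≤ Real.exp (3/4 * l ^ 2 * (q / (n:ℝ)^2)) := by
      intro i
      refine mgf_le_of_bound μ (hmeas i) (by positivity) (hcent i) (hbdd i) (hvar i) hl ?_
      rw [mul_one_div, div_le_one hnpos]
      exact hln
    calc ∏ i, mgf (V i) μ l ≤ ∏ _i : Fin n, Real.exp (3/4 * l ^ 2 * (q / (n:ℝ)^2)) :=
        Finset.prod_le_prod (fun i _ => mgf_nonneg) (fun i _ => hone i)
      _ = Real.exp ((n:ℝ) * (3/4 * l ^ 2 * (q / (n:ℝ)^2))) := by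
        rw [Finset.prod_const, Finset.card_univ, Fintype.card_fin, ← Real.exp_nat_mul]
      _ = Real.exp (3/4 * l ^ 2 * q / n) := by
        congr 1
        field_simp
  calc (μ {ω | t ≤ ∑ i, V i ω}).toReal
      ≤ Real.exp (-l * t) * mgf (fun ω => ∑ i, V i ω) μ l := hcher
    _ ≤ Real.exp (-l * t) * Real.exp (3/4 * l ^ 2 * q / n) := by
        rw [hmgf]
        exact mul_le_mul_of_nonneg_left hbound (Real.exp_nonneg _)
    _ = Real.exp (-l * t + 3/4 * l ^ 2 * q / n) := (Real.exp_add _ _).symm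

lemma tail_two_sided {Ω : Type*} [MeasurableSpace Ω] (μ : Measure Ω) [IsProbabilityMeasure μ]
    (n : ℕ) (hn : 0 < n) (q : ℝ) (hq : 0 < q) (U : Fin n → Ω → ℝ)
    (hmeas : ∀ i, Measurable (U i))
    (hindep : iIndepFun U μ)
    (hcent : ∀ i, ∫ ω, U i ω ∂μ = 0)
    (hbdd : ∀ i, ∀ᵐ ω ∂μ, |U i ω| ≤ 1 / n)
    (hvar : ∀ i, ∫ ω, (U i ω) ^ 2 ∂μ ≤ q / (n : ℝ) ^ 2)
    {t l : ℝ} (hl : 0 ≤ l) (hln : l ≤ n) :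
    (μ {ω | t ≤ |∑ i, U i ω|}).toReal ≤ 2 * Real.exp (-l * t + 3/4 * l ^ 2 * q / n) := by
  have h1 := chernoff_one_sided μ n hn q hq U hmeas hindep hcent hbdd hvar (t := t) hl hln
  have hWmeas : ∀ i, Measurable (fun ω => -(U i ω)) := fun i => (hmeas i).neg
  have hWindep : iIndepFun (fun i => fun ω => -(U i ω)) μ := by
    have := hindep.comp (fun _ => fun x : ℝ => -x) (fun _ => measurable_neg)
    exact this
  have h2 := chernoff_one_sided μ n hn q hq (fun i => fun ω => -(U i ω)) hWmeas hWindep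
    (fun i => by rw [integral_neg, hcent i, neg_zero])
    (fun i => by filter_upwards [hbdd i] with ω h using by rwa [abs_neg])
    (fun i => by simpa using hvar i) (t := t) hl hln
  have hsub : {ω | t ≤ |∑ i, U i ω|} ⊆
      {ω | t ≤ ∑ i, U i ω} ∪ {ω | t ≤ ∑ i, (fun ω' => -(U i ω')) ω} := by
    intro ω hω
    simp only [Set.mem_setOf_eq] at hω
    rcases le_abs.1 hω with h | h
    · exact Or.inl h
    · refine Or.inr ?_
      simp only [Set.mem_setOf_eq, Finset.sum_neg_distrib]
      exact h
  have hle : (μ {ω | t ≤ |∑ i, U i ω|}).toReal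
      ≤ (μ {ω | t ≤ ∑ i, U i ω}).toReal
        + (μ {ω | t ≤ ∑ i, (fun ω' => -(U i ω')) ω}).toReal := by
    rw [← ENNReal.toReal_add (measure_ne_top _ _) (measure_ne_top _ _)]
    apply ENNReal.toReal_mono
    · exact ENNReal.add_ne_top.2 ⟨measure_ne_top _ _, measure_ne_top _ _⟩
    · exact le_trans (measure_mono hsub) (measure_union_le _ _)
  linarith

lemma tail_regime1 {Ω : Type*} [MeasurableSpace Ω] (μ : Measure Ω) [IsProbabilityMeasure μ]
    (n : ℕ) (hn : 0 < n) (q : ℝ) (hq : 0 < q) (U : Fin n → Ω → ℝ)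
    (hmeas : ∀ i, Measurable (U i))
    (hindep : iIndepFun U μ)
    (hcent : ∀ i, ∫ ω, U i ω ∂μ = 0)
    (hbdd : ∀ i, ∀ᵐ ω ∂μ, |U i ω| ≤ 1 / n)
    (hvar : ∀ i, ∫ ω, (U i ω) ^ 2 ∂μ ≤ q / (n : ℝ) ^ 2)
    {t : ℝ} (ht : 0 ≤ t) (ht2 : t ≤ 3 * q / 2) :
    (μ {ω | t ≤ |∑ i, U i ω|}).toReal
      ≤ 2 * Real.exp (-(((n : ℝ) / (3 * q)) * t ^ 2)) := by
  have hnpos : (0:ℝ) < n := Nat.cast_pos.2 hn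
  set l : ℝ := 2 * n * t / (3 * q) with hldef
  have hl : 0 ≤ l := by positivity
  have hln : l ≤ n := by
    rw [hldef, div_le_iff₀ (by positivity)]
    nlinarith
  have h := tail_two_sided μ n hn q hq U hmeas hindep hcent hbdd hvar (t := t) hl hln
  have hexp : -l * t + 3/4 * l ^ 2 * q / n = -(((n : ℝ) / (3 * q)) * t ^ 2) := by
    rw [hldef]
    field_simp
    ring
  rwa [hexp] at h

lemma tail_regime2 {Ω : Type*} [MeasurableSpace Ω] (μ : Measure Ω) [IsProbabilityMeasure μ]
    (n : ℕ) (hn : 0 < n) (q : ℝ) (hq : 0 < q) (U : Fin n → Ω → ℝ)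
    (hmeas : ∀ i, Measurable (U i))
    (hindep : iIndepFun U μ)
    (hcent : ∀ i, ∫ ω, U i ω ∂μ = 0)
    (hbdd : ∀ i, ∀ᵐ ω ∂μ, |U i ω| ≤ 1 / n)
    (hvar : ∀ i, ∫ ω, (U i ω) ^ 2 ∂μ ≤ q / (n : ℝ) ^ 2)
    {t : ℝ} (ht : 3 * q / 2 ≤ t) :
    (μ {ω | t ≤ |∑ i, U i ω|}).toReal ≤ 2 * Real.exp (-(((n : ℝ) / 2) * t)) := by
  have hnpos : (0:ℝ) < n := Nat.cast_pos.2 hn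
  have h := tail_two_sided μ n hn q hq U hmeas hindep hcent hbdd hvar
    (t := t) (le_of_lt hnpos) le_rfl
  refine le_trans h ?_
  have hle : -(n:ℝ) * t + 3/4 * (n:ℝ) ^ 2 * q / n ≤ -(((n : ℝ) / 2) * t) := by
    have he : 3/4 * (n:ℝ) ^ 2 * q / n = 3/4 * n * q := by
      field_simp
    rw [he]
    nlinarith
  have := Real.exp_le_exp.2 hle
  linarith

/- ### Layer cake -/

lemma measurable_tail {Ω : Type*} [MeasurableSpace Ω] (μ : Measure Ω) [IsFiniteMeasure μ]
    (f : Ω → ℝ) : Measurable fun t : ℝ => (μ {ω | t ≤ f ω}).toReal := by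
  apply Antitone.measurable
  intro t₁ t₂ h
  exact ENNReal.toReal_mono (measure_ne_top _ _) (measure_mono fun ω hω => le_trans h hω)

lemma tail_eq_zero {Ω : Type*} [MeasurableSpace Ω] (μ : Measure Ω) (f : Ω → ℝ)
    (hf1 : ∀ᵐ ω ∂μ, f ω ≤ 1) {t : ℝ} (ht : 1 < t) : μ {ω | t ≤ f ω} = 0 := by
  have h0 : μ {ω | ¬ f ω ≤ 1} = 0 := ae_iff.1 hf1
  exact measure_mono_null (fun ω hω => not_le.2 (lt_of_lt_of_le ht hω)) h0

lemma integrableOn_layer {Ω : Type*} [MeasurableSpace Ω] (μ : Measure Ω) [IsProbabilityMeasure μ]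
    (f : Ω → ℝ) (hf1 : ∀ᵐ ω ∂μ, f ω ≤ 1) {p : ℝ} (hp : 1 ≤ p) :
    IntegrableOn (fun t : ℝ => t ^ (p - 1) * (μ {ω | t ≤ f ω}).toReal) (Set.Ioi 0) := by
  have hmeasF : Measurable fun t : ℝ => (μ {ω | t ≤ f ω}).toReal := measurable_tail μ f
  have hmeash : Measurable fun t : ℝ => t ^ (p - 1) * (μ {ω | t ≤ f ω}).toReal :=
    ((Real.continuous_rpow_const (by linarith : (0:ℝ) ≤ p - 1)).measurable).mul hmeasF
  have hsplit : Set.Ioi (0:ℝ) = Set.Ioc (0:ℝ) 1 ∪ Set.Ioi 1 :=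
    (Set.Ioc_union_Ioi_eq_Ioi zero_le_one).symm
  rw [hsplit]
  apply IntegrableOn.union
  · refine Integrable.mono' (g := fun _ => (1:ℝ))
      (integrableOn_const measure_Ioc_lt_top.ne (by simp)) hmeash.aestronglyMeasurable ?_
    rw [ae_restrict_iff' measurableSet_Ioc]
    refine Filter.Eventually.of_forall fun t ht => ?_
    rw [Real.norm_eq_abs, abs_mul, abs_of_nonneg (Real.rpow_nonneg (le_of_lt ht.1) _),
      abs_of_nonneg ENNReal.toReal_nonneg]
    calc t ^ (p - 1) * (μ {ω | t ≤ f ω}).toReal ≤ 1 * 1 := by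
          apply mul_le_mul
          · exact Real.rpow_le_one (le_of_lt ht.1) ht.2 (by linarith)
          · exact ENNReal.toReal_le_of_le_ofReal zero_le_one (by simpa using prob_le_one)
          · exact ENNReal.toReal_nonneg
          · exact zero_le_one
      _ = 1 := one_mul 1
  · have heq : Set.EqOn (fun _ : ℝ => (0:ℝ))
        (fun t : ℝ => t ^ (p - 1) * (μ {ω | t ≤ f ω}).toReal) (Set.Ioi 1) := by
      intro t ht
      simp only
      rw [tail_eq_zero μ f hf1 ht]
      simp
    exact (integrableOn_zero).congr_fun heq measurableSet_Ioi

lemma layercake_rpow {Ω : Type*} [MeasurableSpace Ω] (μ : Measure Ω) [IsProbabilityMeasure μ]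
    (f : Ω → ℝ) (hf : Measurable f) (hf0 : ∀ ω, 0 ≤ f ω) (hf1 : ∀ᵐ ω ∂μ, f ω ≤ 1)
    {p : ℝ} (hp : 1 ≤ p) :
    ∫ ω, f ω ^ p ∂μ = p * ∫ t in Set.Ioi (0:ℝ), t ^ (p - 1) * (μ {ω | t ≤ f ω}).toReal := by
  have hp0 : (0:ℝ) < p := lt_of_lt_of_le one_pos hp
  have hg_intble : ∀ t > (0:ℝ), IntervalIntegrable (fun t => p * t ^ (p - 1)) volume 0 t :=
    fun t _ => (intervalIntegral.intervalIntegrable_rpow' (by linarith)).const_mul p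
  have hg_nn : ∀ᵐ t ∂(volume.restrict (Set.Ioi (0:ℝ))), 0 ≤ p * t ^ (p - 1) := by
    rw [ae_restrict_iff' measurableSet_Ioi]
    exact Filter.Eventually.of_forall fun t ht =>
      mul_nonneg hp0.le (Real.rpow_nonneg (le_of_lt ht) _)
  have key := lintegral_comp_eq_lintegral_meas_le_mul μ (Filter.Eventually.of_forall hf0)
    hf.aemeasurable hg_intble hg_nn
  have hinner : ∀ ω, (∫ t in (0:ℝ)..(f ω), p * t ^ (p - 1)) = f ω ^ p := by
    intro ω
    rw [intervalIntegral.integral_const_mul, integral_rpow (Or.inl (by linarith))]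
    have he : p - 1 + 1 = p := by ring
    rw [he, Real.zero_rpow hp0.ne']
    field_simp
    ring
  simp_rw [hinner] at key
  have hint_fp : Integrable (fun ω => f ω ^ p) μ := by
    refine Integrable.mono' (integrable_const 1)
      ((Real.continuous_rpow_const hp0.le).measurable.comp hf).aestronglyMeasurable ?_
    filter_upwards [hf1] with ω h
    rw [Real.norm_eq_abs, abs_of_nonneg (Real.rpow_nonneg (hf0 ω) _)]
    exact Real.rpow_le_one (hf0 ω) h hp0.le
  have hLHS : ∫⁻ ω, ENNReal.ofReal (f ω ^ p) ∂μ = ENNReal.ofReal (∫ ω, f ω ^ p ∂μ) :=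
    (ofReal_integral_eq_lintegral_ofReal hint_fp
      (Filter.Eventually.of_forall fun ω => Real.rpow_nonneg (hf0 ω) _)).symm
  have hRHSpt : ∀ t : ℝ, μ {a | t ≤ f a} * ENNReal.ofReal (p * t ^ (p - 1))
      = ENNReal.ofReal ((μ {a | t ≤ f a}).toReal * (p * t ^ (p - 1))) := by
    intro t
    rw [ENNReal.ofReal_mul ENNReal.toReal_nonneg, ENNReal.ofReal_toReal (measure_ne_top μ _)]
  have hintOn : IntegrableOn (fun t : ℝ => (μ {a | t ≤ f a}).toReal * (p * t ^ (p - 1)))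
      (Set.Ioi 0) := by
    have h : IntegrableOn (fun t : ℝ => p * (t ^ (p - 1) * (μ {ω | t ≤ f ω}).toReal))
        (Set.Ioi 0) := (integrableOn_layer μ f hf1 hp).const_mul p
    exact IntegrableOn.congr_fun h (fun t _ => by ring) measurableSet_Ioi
  have hRHS : ∫⁻ t in Set.Ioi (0:ℝ), μ {a | t ≤ f a} * ENNReal.ofReal (p * t ^ (p - 1))
      = ENNReal.ofReal (∫ t in Set.Ioi (0:ℝ), (μ {a | t ≤ f a}).toReal * (p * t ^ (p - 1))) := by
    simp_rw [hRHSpt]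
    refine (ofReal_integral_eq_lintegral_ofReal hintOn ?_).symm
    filter_upwards [ae_restrict_mem measurableSet_Ioi] with t ht
    exact mul_nonneg ENNReal.toReal_nonneg
      (mul_nonneg hp0.le (Real.rpow_nonneg (le_of_lt ht) _))
  rw [hLHS, hRHS] at key
  have hnn2 : 0 ≤ ∫ t in Set.Ioi (0:ℝ), (μ {a | t ≤ f a}).toReal * (p * t ^ (p - 1)) :=
    setIntegral_nonneg measurableSet_Ioi fun t ht => mul_nonneg ENNReal.toReal_nonneg
      (mul_nonneg hp0.le (Real.rpow_nonneg (le_of_lt ht) _))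
  have heq := (ENNReal.ofReal_eq_ofReal_iff
    (integral_nonneg fun ω => Real.rpow_nonneg (hf0 ω) _) hnn2).1 key
  rw [heq, ← integral_const_mul]
  refine setIntegral_congr_fun measurableSet_Ioi fun t ht => ?_
  ring

/- ### Gamma integrals -/

lemma integral_exp_linear {c : ℝ} (hc : 0 < c) {a : ℝ} (ha : 0 ≤ a) (s : ℝ) :
    ∫ t in Set.Ioi a, t ^ (s - 1) * Real.exp (-(c * t)) = c ^ (-s) * upperGamma s (c * a) := by
  have h := MeasureTheory.integral_comp_mul_left_Ioi
    (fun u : ℝ => u ^ (s - 1) * Real.exp (-u)) a hc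
  simp only [smul_eq_mul] at h
  have h1 : (∫ x in Set.Ioi a, (c * x) ^ (s - 1) * Real.exp (-(c * x)))
      = c ^ (s - 1) * ∫ x in Set.Ioi a, x ^ (s - 1) * Real.exp (-(c * x)) := by
    rw [← integral_const_mul]
    refine setIntegral_congr_fun measurableSet_Ioi fun x hx => ?_
    have hx0 : (0:ℝ) ≤ x := le_trans ha (le_of_lt hx)
    rw [Real.mul_rpow hc.le hx0]
    ring
  rw [h1] at h
  have hcs : (0:ℝ) < c ^ (s - 1) := Real.rpow_pos_of_pos hc _
  have h2 : (∫ x in Set.Ioi a, x ^ (s - 1) * Real.exp (-(c * x)))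
      = (c ^ (s-1))⁻¹ * (c⁻¹ * upperGamma s (c * a)) := by
    rw [upperGamma, ← h]
    field_simp
  have h3 : (c ^ (s-1))⁻¹ * c⁻¹ = c ^ (-s) := by
    rw [← Real.rpow_neg hc.le, ← Real.rpow_neg_one c, ← Real.rpow_add hc]
    ring_nf
  rw [h2, ← mul_assoc, h3]

lemma upperGamma_zero {s : ℝ} (hs : 0 < s) : upperGamma s 0 = Real.Gamma s := by
  rw [upperGamma, Real.Gamma_eq_integral hs]
  exact setIntegral_congr_fun measurableSet_Ioi fun x hx => mul_comm _ _

lemma integrableOn_upperGamma {s : ℝ} (hs : 0 < s) {a : ℝ} (ha : 0 ≤ a) :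
    IntegrableOn (fun u : ℝ => u ^ (s - 1) * Real.exp (-u)) (Set.Ioi a) := by
  have h := Real.GammaIntegral_convergent hs
  have h2 : IntegrableOn (fun u : ℝ => u ^ (s-1) * Real.exp (-u)) (Set.Ioi 0) :=
    h.congr_fun (fun x hx => mul_comm _ _) measurableSet_Ioi
  exact h2.mono_set (Set.Ioi_subset_Ioi ha)

lemma upperGamma_mono {s x y : ℝ} (hs : 0 < s) (hx : 0 ≤ x) (hxy : x ≤ y) :
    upperGamma s y ≤ upperGamma s x := by
  refine setIntegral_mono_set (integrableOn_upperGamma hs hx) ?_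
    (HasSubset.Subset.eventuallyLE (Set.Ioi_subset_Ioi hxy))
  filter_upwards [ae_restrict_mem measurableSet_Ioi] with u hu
  exact mul_nonneg (Real.rpow_nonneg (le_trans hx (le_of_lt hu)) _) (Real.exp_nonneg _)

lemma integral_gaussian_rpow {c s : ℝ} (hc : 0 < c) (hs : 0 < s) :
    ∫ t in Set.Ioi (0:ℝ), t ^ (2 * s - 1) * Real.exp (-(c * t ^ 2))
      = 1/2 * c ^ (-s) * Real.Gamma s := by
  have key := MeasureTheory.integral_comp_rpow_Ioi_of_pos
    (g := fun y : ℝ => y ^ (s - 1) * Real.exp (-(c * y))) (p := 2) two_pos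
  have hrhs : (∫ y in Set.Ioi (0:ℝ), y ^ (s - 1) * Real.exp (-(c * y)))
      = c ^ (-s) * Real.Gamma s := by
    rw [integral_exp_linear hc le_rfl s, mul_zero]
    congr 1
    exact upperGamma_zero hs
  rw [hrhs] at key
  have hlhs : (∫ x in Set.Ioi (0:ℝ),
        (2 * x ^ ((2:ℝ) - 1)) • ((x ^ (2:ℝ)) ^ (s - 1) * Real.exp (-(c * x ^ (2:ℝ)))))
      = 2 * ∫ t in Set.Ioi (0:ℝ), t ^ (2 * s - 1) * Real.exp (-(c * t ^ 2)) := by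
    rw [← integral_const_mul]
    refine setIntegral_congr_fun measurableSet_Ioi fun x hx => ?_
    have hx0 : (0:ℝ) < x := hx
    have e1 : x ^ ((2:ℝ)) = x ^ (2:ℕ) := by
      rw [← Real.rpow_natCast x 2]; norm_num
    have e2 : (x ^ ((2:ℝ))) ^ (s - 1) = x ^ (2 * (s - 1)) := by
      rw [← Real.rpow_mul hx0.le]
    have e3 : x ^ ((2:ℝ) - 1) = x := by norm_num
    rw [smul_eq_mul, e3, e2, e1]
    have e4 : x * x ^ (2 * (s - 1)) = x ^ (2 * s - 1) := by
      have h5 := Real.rpow_add hx0 1 (2 * (s - 1))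
      rw [Real.rpow_one] at h5
      rw [← h5]
      ring_nf
    rw [← e4]
    ring
  rw [hlhs] at key
  linarith

/- ### Main theorem -/

/-- Bernstein two-regime tail integral bound for sums of bounded i.i.d. centered variables. -/
theorem bernstein_tail_integral_bound {Ω : Type*} [MeasurableSpace Ω]
    (μ : Measure Ω) [IsProbabilityMeasure μ] (n : ℕ) (hn : 0 < n)
    (q : ℝ) (hq : 0 < q) (U : Fin n → Ω → ℝ)
    (hmeas : ∀ i, Measurable (U i))
    (hindep : iIndepFun U μ)
    (hident : ∀ i j, IdentDistrib (U i) (U j) μ μ)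
    (hcent : ∀ i, ∫ ω, U i ω ∂μ = 0)
    (hbdd : ∀ i, ∀ᵐ ω ∂μ, |U i ω| ≤ 1 / n)
    (hvar : ∀ i, ∫ ω, (U i ω) ^ 2 ∂μ ≤ q / (n : ℝ) ^ 2)
    (p : ℝ) (hp : 2 ≤ p) :
    (∫ ω, |∑ i, U i ω| ^ p ∂μ)
        = p * ∫ t in Set.Ioi (0:ℝ), t ^ (p - 1) * (μ {ω | t ≤ |∑ i, U i ω|}).toReal ∧
    ∫ ω, |∑ i, U i ω| ^ p ∂μ
        ≤ 2 * p * ((1 / 2) * (3 * q / n) ^ (p / 2) * Real.Gamma (p / 2)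
            + (2 / n) ^ p * upperGamma p (n * q / 4)) := by
  have hnpos : (0:ℝ) < n := Nat.cast_pos.2 hn
  have hn0 : ((n:ℝ)) ≠ 0 := hnpos.ne'
  have hp1 : (1:ℝ) ≤ p := by linarith
  have hp0 : (0:ℝ) < p := by linarith
  have hSmeas : Measurable (fun ω => |∑ i, U i ω|) :=
    (Finset.measurable_sum _ fun i _ => hmeas i).abs
  have hf0 : ∀ ω, 0 ≤ |∑ i, U i ω| := fun ω => abs_nonneg _
  have hf1 : ∀ᵐ ω ∂μ, |∑ i, U i ω| ≤ 1 := by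
    filter_upwards [ae_all_iff.2 hbdd] with ω h
    calc |∑ i, U i ω| ≤ ∑ i, |U i ω| := Finset.abs_sum_le_sum_abs _ _
      _ ≤ ∑ _i : Fin n, (1:ℝ)/n := Finset.sum_le_sum fun i _ => h i
      _ = 1 := by simp [Finset.sum_const]; field_simp
  have part1 := layercake_rpow μ (fun ω => |∑ i, U i ω|) hSmeas hf0 hf1 hp1
  refine ⟨part1, ?_⟩
  rw [part1]
  -- notation
  set T : ℝ := 3 * q / 2 with hTdef
  have hT : (0:ℝ) < T := by rw [hTdef]; positivity
  set c₁ : ℝ := (n:ℝ) / (3 * q) with hc₁def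
  set c₂ : ℝ := (n:ℝ) / 2 with hc₂def
  have hc₁ : (0:ℝ) < c₁ := by rw [hc₁def]; positivity
  have hc₂ : (0:ℝ) < c₂ := by rw [hc₂def]; positivity
  have hintF : IntegrableOn
      (fun t : ℝ => t ^ (p - 1) * (μ {ω | t ≤ |∑ i, U i ω|}).toReal) (Set.Ioi 0) :=
    integrableOn_layer μ (fun ω => |∑ i, U i ω|) hf1 hp1
  -- comparison functions
  have hg₁int : IntegrableOn
      (fun t : ℝ => t ^ (p - 1) * (2 * Real.exp (-(c₁ * t ^ 2)))) (Set.Ioi 0) := by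
    have hbase : IntegrableOn (fun x : ℝ => x ^ (p - 1) * Real.exp (-c₁ * x ^ 2))
        (Set.Ioi 0) := integrableOn_rpow_mul_exp_neg_mul_sq hc₁ (by linarith)
    have h2 : IntegrableOn (fun x : ℝ => 2 * (x ^ (p - 1) * Real.exp (-c₁ * x ^ 2)))
        (Set.Ioi 0) := hbase.const_mul 2
    exact IntegrableOn.congr_fun h2 (fun t _ => by rw [neg_mul]; ring) measurableSet_Ioi
  have hg₂int : IntegrableOn
      (fun t : ℝ => t ^ (p - 1) * (2 * Real.exp (-(c₂ * t)))) (Set.Ioi T) := by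
    have hbase : IntegrableOn (fun u : ℝ => u ^ (p - 1) * Real.exp (-u))
        (Set.Ioi (c₂ * T)) := integrableOn_upperGamma hp0 (by positivity)
    have h1 : IntegrableOn (fun x : ℝ => (c₂ * x) ^ (p - 1) * Real.exp (-(c₂ * x)))
        (Set.Ioi T) :=
      (integrableOn_Ioi_comp_mul_left_iff
        (fun u : ℝ => u ^ (p - 1) * Real.exp (-u)) T hc₂).2 hbase
    have h2 : IntegrableOn
        (fun x : ℝ => 2 * (c₂ ^ (p-1))⁻¹ * ((c₂ * x) ^ (p - 1) * Real.exp (-(c₂ * x))))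
        (Set.Ioi T) := h1.const_mul _
    refine IntegrableOn.congr_fun h2 (fun t ht => ?_) measurableSet_Ioi
    have ht0 : (0:ℝ) ≤ t := le_of_lt (lt_trans hT ht)
    rw [Real.mul_rpow hc₂.le ht0]
    have : (c₂ ^ (p-1)) ≠ 0 := (Real.rpow_pos_of_pos hc₂ _).ne'
    field_simp
  -- splitting
  have hsplit : Set.Ioi (0:ℝ) = Set.Ioc (0:ℝ) T ∪ Set.Ioi T :=
    (Set.Ioc_union_Ioi_eq_Ioi hT.le).symm
  have hstep1 : (∫ t in Set.Ioi (0:ℝ), t ^ (p - 1) * (μ {ω | t ≤ |∑ i, U i ω|}).toReal)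
      = (∫ t in Set.Ioc (0:ℝ) T, t ^ (p - 1) * (μ {ω | t ≤ |∑ i, U i ω|}).toReal)
        + ∫ t in Set.Ioi T, t ^ (p - 1) * (μ {ω | t ≤ |∑ i, U i ω|}).toReal := by
    rw [hsplit]
    exact setIntegral_union (Set.Ioc_disjoint_Ioi le_rfl) measurableSet_Ioi
      (hintF.mono_set (by rw [hsplit]; exact Set.subset_union_left))
      (hintF.mono_set (by rw [hsplit]; exact Set.subset_union_right))
  have hstep2 : (∫ t in Set.Ioc (0:ℝ) T, t ^ (p - 1) * (μ {ω | t ≤ |∑ i, U i ω|}).toReal)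
      ≤ ∫ t in Set.Ioc (0:ℝ) T, t ^ (p - 1) * (2 * Real.exp (-(c₁ * t ^ 2))) := by
    refine setIntegral_mono_on
      (hintF.mono_set (by rw [hsplit]; exact Set.subset_union_left))
      (hg₁int.mono_set Set.Ioc_subset_Ioi_self) measurableSet_Ioc fun t ht => ?_
    refine mul_le_mul_of_nonneg_left ?_ (Real.rpow_nonneg (le_of_lt ht.1) _)
    exact tail_regime1 μ n hn q hq U hmeas hindep hcent hbdd hvar (le_of_lt ht.1) ht.2
  have hstep3 : (∫ t in Set.Ioc (0:ℝ) T, t ^ (p - 1) * (2 * Real.exp (-(c₁ * t ^ 2))))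
      ≤ ∫ t in Set.Ioi (0:ℝ), t ^ (p - 1) * (2 * Real.exp (-(c₁ * t ^ 2))) := by
    refine setIntegral_mono_set hg₁int ?_
      (HasSubset.Subset.eventuallyLE Set.Ioc_subset_Ioi_self)
    filter_upwards [ae_restrict_mem measurableSet_Ioi] with t ht
    exact mul_nonneg (Real.rpow_nonneg (le_of_lt ht) _) (by positivity)
  have hstep4 : (∫ t in Set.Ioi (0:ℝ), t ^ (p - 1) * (2 * Real.exp (-(c₁ * t ^ 2))))
      = 2 * (1/2 * c₁ ^ (-(p/2)) * Real.Gamma (p/2)) := by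
    have hg := integral_gaussian_rpow (c := c₁) (s := p/2) hc₁ (by linarith)
    have h2s : 2 * (p/2) - 1 = p - 1 := by ring
    rw [h2s] at hg
    rw [← hg, ← integral_const_mul]
    refine setIntegral_congr_fun measurableSet_Ioi fun t ht => ?_
    ring
  have hstep5 : (∫ t in Set.Ioi T, t ^ (p - 1) * (μ {ω | t ≤ |∑ i, U i ω|}).toReal)
      ≤ ∫ t in Set.Ioi T, t ^ (p - 1) * (2 * Real.exp (-(c₂ * t))) := by
    refine setIntegral_mono_on
      (hintF.mono_set (by rw [hsplit]; exact Set.subset_union_right))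
      hg₂int measurableSet_Ioi fun t ht => ?_
    have ht0 : (0:ℝ) ≤ t := le_of_lt (lt_trans hT ht)
    refine mul_le_mul_of_nonneg_left ?_ (Real.rpow_nonneg ht0 _)
    exact tail_regime2 μ n hn q hq U hmeas hindep hcent hbdd hvar (le_of_lt ht)
  have hstep6 : (∫ t in Set.Ioi T, t ^ (p - 1) * (2 * Real.exp (-(c₂ * t))))
      = 2 * (c₂ ^ (-p) * upperGamma p (c₂ * T)) := by
    have hg := integral_exp_linear hc₂ hT.le p
    rw [← hg, ← integral_const_mul]
    refine setIntegral_congr_fun measurableSet_Ioi fun t ht => ?_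
    ring
  have hstep7 : upperGamma p (c₂ * T) ≤ upperGamma p ((n:ℝ) * q / 4) := by
    refine upperGamma_mono hp0 (by positivity) ?_
    rw [hc₂def, hTdef]
    nlinarith
  -- rpow conversions
  have hA : c₁ ^ (-(p/2)) = (3 * q / (n:ℝ)) ^ (p/2) := by
    rw [Real.rpow_neg hc₁.le, ← Real.inv_rpow hc₁.le, hc₁def, inv_div]
  have hB : c₂ ^ (-p) = (2 / (n:ℝ)) ^ p := by
    rw [Real.rpow_neg hc₂.le, ← Real.inv_rpow hc₂.le, hc₂def, inv_div]
  have hGnn : 0 ≤ upperGamma p ((n:ℝ) * q / 4) := by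
    refine setIntegral_nonneg measurableSet_Ioi fun u hu => ?_
    have hu0 : (0:ℝ) ≤ u := le_of_lt (lt_of_le_of_lt (by positivity) hu)
    exact mul_nonneg (Real.rpow_nonneg hu0 _) (Real.exp_nonneg _)
  have hstep8 : 2 * (c₂ ^ (-p) * upperGamma p (c₂ * T))
      ≤ 2 * ((2 / (n:ℝ)) ^ p * upperGamma p ((n:ℝ) * q / 4)) := by
    rw [hB]
    refine mul_le_mul_of_nonneg_left ?_ (by norm_num)
    exact mul_le_mul_of_nonneg_left hstep7 (Real.rpow_nonneg (by positivity) _)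
  have htotal : (∫ t in Set.Ioi (0:ℝ), t ^ (p - 1) * (μ {ω | t ≤ |∑ i, U i ω|}).toReal)
      ≤ (3 * q / (n:ℝ)) ^ (p/2) * Real.Gamma (p/2)
        + 2 * ((2 / (n:ℝ)) ^ p * upperGamma p ((n:ℝ) * q / 4)) := by
    have := hstep4 ▸ (hstep2.trans hstep3)
    have h6 := hstep5.trans (hstep6.le.trans (le_of_eq rfl))
    rw [hstep1]
    have hAe : 2 * (1/2 * c₁ ^ (-(p/2)) * Real.Gamma (p/2))
        = (3 * q / (n:ℝ)) ^ (p/2) * Real.Gamma (p/2) := by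
      rw [hA]; ring
    have h5' := hstep5.trans (le_of_eq hstep6)
    have h5'' := h5'.trans hstep8
    linarith [this, h5'', hAe ▸ this]
  calc p * (∫ t in Set.Ioi (0:ℝ), t ^ (p - 1) * (μ {ω | t ≤ |∑ i, U i ω|}).toReal)
      ≤ p * ((3 * q / (n:ℝ)) ^ (p/2) * Real.Gamma (p/2)
          + 2 * ((2 / (n:ℝ)) ^ p * upperGamma p ((n:ℝ) * q / 4))) :=
        mul_le_mul_of_nonneg_left htotal hp0.le
    _ = 2 * p * ((1 / 2) * (3 * q / (n:ℝ)) ^ (p / 2) * Real.Gamma (p / 2)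
          + (2 / (n:ℝ)) ^ p * upperGamma p ((n:ℝ) * q / 4)) := by ring
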